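/- arXiv:2201.12110 — 2 statements merged into one kernel-verified Lean document; each statement's English description precedes it below -/
import Mathlib

section
/- Let A and B be operators on a finite-dimensional Hilbert space with 0 ≤ A ≤ I and B ≥ 0, and let c > 0 be a real number. Then I − (A+B)^{−1/2} A (A+B)^{−1/2} ≤ (1+c)(I − A) + (2 + c + c^{−1}) B, where the inverse square root is taken on the support of A+B. -/
open Matrix BigOperators
open scoped ComplexOrder

/-- `R` is the Moore–Penrose pseudo-inverse square root of the positive operator `S`:
`R` is positive semidefinite and `R * R` is the Moore–Penrose pseudo-inverse of `S`. -/
def IsPinvSqrt {n : Type*} [Fintype n] [DecidableEq n] (S R : Matrix n n ℂ) : Prop :=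
  R.PosSemidef ∧ S * (R * R) * S = S ∧ (R * R) * S * (R * R) = R * R ∧
    (S * (R * R))ᴴ = S * (R * R) ∧ ((R * R) * S)ᴴ = (R * R) * S

section HayashiNagaokaAux

set_option linter.unusedSectionVars false
set_option linter.unusedVariables false

variable {n : Type*} [Fintype n] [DecidableEq n]

omit [Fintype n] [DecidableEq n] in
lemma real_smul_eq (M : Matrix n n ℂ) (r : ℝ) : r • M = (r : ℂ) • M := by
  ext i j; simp [Complex.real_smul]

lemma smul_posSemidef {M : Matrix n n ℂ} (hM : M.PosSemidef) {r : ℝ} (hr : 0 ≤ r) :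
    (r • M).PosSemidef := by
  rw [real_smul_eq]
  refine Matrix.PosSemidef.of_dotProduct_mulVec_nonneg ?_ ?_
  · rw [Matrix.IsHermitian, Matrix.conjTranspose_smul, hM.1.eq, Complex.star_def,
      Complex.conj_ofReal]
  · intro x
    rw [Matrix.smul_mulVec, dotProduct_smul, smul_eq_mul]
    exact mul_nonneg (Complex.zero_le_real.mpr hr) (hM.dotProduct_mulVec_nonneg x)


/-- If `V, W` are psd and `W*W - V*V` is psd, then `W - V` is psd (operator monotonicity
of the square root). -/
lemma posSemidef_sub_of_sq {V W : Matrix n n ℂ} (hV : V.PosSemidef) (hW : W.PosSemidef)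
    (h : (W * W - V * V).PosSemidef) : (W - V).PosSemidef := by
  have hD : (W - V).IsHermitian := hW.1.sub hV.1
  rw [hD.posSemidef_iff_eigenvalues_nonneg]
  intro i
  rw [Pi.zero_apply]
  by_contra hneg
  push_neg at hneg
  set t : ℝ := hD.eigenvalues i with ht
  set u : n → ℂ := (hD.eigenvectorBasis i : n → ℂ) with hu
  have hu0 : u ≠ 0 := fun h0 => hD.eigenvectorBasis.orthonormal.ne_zero i
    (by simpa [hu] using h0)
  have heig : (W - V) *ᵥ u = (t : ℂ) • u := by
    have := hD.mulVec_eigenvectorBasis i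
    simpa [← ht, ← hu, RCLike.real_smul_eq_coe_mul] using this
  -- key identity: 2 * (u* (W²-V²) u) = 2 t * (u* (W+V) u)
  have hkey : star u ⬝ᵥ ((W * W - V * V) *ᵥ u) = (t : ℂ) * (star u ⬝ᵥ ((W + V) *ᵥ u)) := by
    have hsplit : (2 : ℂ) • (W * W - V * V) = (W - V) * (W + V) + (W + V) * (W - V) := by
      rw [two_smul]; noncomm_ring
    have e1 : star u ⬝ᵥ (((W - V) * (W + V)) *ᵥ u) = (t : ℂ) * (star u ⬝ᵥ ((W + V) *ᵥ u)) := by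
      rw [← Matrix.mulVec_mulVec, Matrix.dotProduct_mulVec (star u) (W - V),
        show star u ᵥ* (W - V) = star u ᵥ* (W - V)ᴴ by rw [hD.eq],
        ← Matrix.star_mulVec, heig]
      simp [smul_dotProduct, star_smul, Complex.star_def, Complex.conj_ofReal]
    have e2 : star u ⬝ᵥ (((W + V) * (W - V)) *ᵥ u) = (t : ℂ) * (star u ⬝ᵥ ((W + V) *ᵥ u)) := by
      rw [← Matrix.mulVec_mulVec, heig]
      simp [Matrix.mulVec_smul, dotProduct_smul]
    have e3 : star u ⬝ᵥ (((W - V) * (W + V) + (W + V) * (W - V)) *ᵥ u)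
        = (2 : ℂ) * ((t : ℂ) * (star u ⬝ᵥ ((W + V) *ᵥ u))) := by
      rw [Matrix.add_mulVec, dotProduct_add, e1, e2, two_mul]
    have e4 : star u ⬝ᵥ (((2 : ℂ) • (W * W - V * V)) *ᵥ u)
        = (2 : ℂ) * (star u ⬝ᵥ ((W * W - V * V) *ᵥ u)) := by
      rw [Matrix.smul_mulVec, dotProduct_smul, smul_eq_mul]
    rw [hsplit, e3] at e4
    exact mul_left_cancel₀ (two_ne_zero (α := ℂ)) e4.symm
  have hs_nonneg : 0 ≤ star u ⬝ᵥ ((W + V) *ᵥ u) := (hW.add hV).dotProduct_mulVec_nonneg u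
  have hq_nonneg : 0 ≤ star u ⬝ᵥ ((W * W - V * V) *ᵥ u) := h.dotProduct_mulVec_nonneg u
  -- t < 0 and nonneg product force s = 0
  have hs0 : star u ⬝ᵥ ((W + V) *ᵥ u) = 0 := by
    by_contra hs
    have hspos : 0 < star u ⬝ᵥ ((W + V) *ᵥ u) := lt_of_le_of_ne hs_nonneg (Ne.symm hs)
    have : (t : ℂ) * (star u ⬝ᵥ ((W + V) *ᵥ u)) < 0 :=
      mul_neg_of_neg_of_pos (by exact_mod_cast Complex.real_lt_real.mpr hneg) hspos
    rw [← hkey] at this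
    exact this.not_ge hq_nonneg
  -- then W u = 0 and V u = 0
  have hWu : star u ⬝ᵥ (W *ᵥ u) = 0 ∧ star u ⬝ᵥ (V *ᵥ u) = 0 := by
    have hsum : star u ⬝ᵥ (W *ᵥ u) + star u ⬝ᵥ (V *ᵥ u) = 0 := by
      rw [← dotProduct_add, ← Matrix.add_mulVec]; exact hs0
    constructor
    · refine le_antisymm ?_ (hW.dotProduct_mulVec_nonneg u)
      rw [add_comm, add_eq_zero_iff_eq_neg] at hsum
      simpa [hsum, neg_nonneg] using hV.dotProduct_mulVec_nonneg u
    · refine le_antisymm ?_ (hV.dotProduct_mulVec_nonneg u)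
      rw [add_eq_zero_iff_eq_neg] at hsum
      simpa [hsum, neg_nonneg] using hW.dotProduct_mulVec_nonneg u
  have hW0 : W *ᵥ u = 0 := (hW.dotProduct_mulVec_zero_iff u).mp hWu.1
  have hV0 : V *ᵥ u = 0 := (hV.dotProduct_mulVec_zero_iff u).mp hWu.2
  have : (t : ℂ) • u = 0 := by rw [← heig, Matrix.sub_mulVec, hW0, hV0, sub_zero]
  rcases smul_eq_zero.mp this with h' | h'
  · exact hneg.ne (by exact_mod_cast h') |>.elim
  · exact hu0 h'


/-- If `C` commutes with `R*R` for `R` psd, then `C` commutes with `R`. -/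
lemma commute_of_commute_sq {R C : Matrix n n ℂ} (hR : R.PosSemidef)
    (h : C * (R * R) = (R * R) * C) : C * R = R * C := by
  obtain ⟨d0, hd0, U, hU1, hU2, hspec⟩ : ∃ (d0 : n → ℝ), (∀ i, 0 ≤ d0 i) ∧
      ∃ U : Matrix n n ℂ, star U * U = 1 ∧ U * star U = 1 ∧
        R = U * Matrix.diagonal (fun i => (d0 i : ℂ)) * star U := by
    refine ⟨hR.1.eigenvalues, hR.eigenvalues_nonneg, hR.1.eigenvectorUnitary,
      Matrix.mem_unitaryGroup_iff'.mp hR.1.eigenvectorUnitary.2,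
      Matrix.mem_unitaryGroup_iff.mp hR.1.eigenvectorUnitary.2, ?_⟩
    exact hR.1.spectral_theorem
  clear hR
  set d : n → ℂ := fun i => (d0 i : ℂ) with hd
  set D : Matrix n n ℂ := Matrix.diagonal d with hD
  have cancel1 : ∀ X : Matrix n n ℂ, U * (star U * X) = X := fun X => by
    rw [← mul_assoc, hU2, one_mul]
  have cancel2 : ∀ X : Matrix n n ℂ, star U * (U * X) = X := fun X => by
    rw [← mul_assoc, hU1, one_mul]
  set C' : Matrix n n ℂ := star U * C * U with hC'
  have hCUC : U * C' * star U = C := by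
    rw [hC']
    calc U * (star U * C * U) * star U = (U * star U) * C * (U * star U) := by noncomm_ring
      _ = C := by rw [hU2, one_mul, mul_one]
  have hsq : R * R = U * (D * D) * star U := by
    rw [hspec]
    calc U * D * star U * (U * D * star U) = U * (D * ((star U * U) * (D * star U))) := by
          noncomm_ring
      _ = U * (D * D) * star U := by rw [hU1, one_mul]; noncomm_ring
  have hcomm' : C' * (D * D) = (D * D) * C' := by
    have h2 : U * (C' * (D * D)) * star U = U * ((D * D) * C') * star U := by
      calc U * (C' * (D * D)) * star U
          = (U * C' * star U) * (U * (D * D) * star U) := by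
            rw [mul_assoc (U * C') (star U) _]
            rw [show star U * (U * (D * D) * star U) = (star U * U) * (D * D) * star U by
              noncomm_ring, hU1, one_mul]
            noncomm_ring
        _ = (U * (D * D) * star U) * (U * C' * star U) := by rw [hCUC, ← hsq, h]
        _ = U * ((D * D) * C') * star U := by
            rw [hCUC]
            rw [show U * (D * D) * star U * C = U * ((D * D) * (star U * C)) by noncomm_ring]
            rw [show U * ((D * D) * C') * star U = U * ((D * D) * (star U * C)) * (U * star U) by
              rw [hC']; noncomm_ring, hU2, mul_one]
    have h3 := congrArg (fun X => star U * X * U) h2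
    calc C' * (D * D) = (star U * U) * (C' * (D * D)) * (star U * U) := by
          rw [hU1, one_mul, mul_one]
      _ = star U * (U * (C' * (D * D)) * star U) * U := by noncomm_ring
      _ = star U * (U * ((D * D) * C') * star U) * U := by rw [h2]
      _ = (star U * U) * ((D * D) * C') * (star U * U) := by noncomm_ring
      _ = (D * D) * C' := by rw [hU1, one_mul, mul_one]
  have hcommD : C' * D = D * C' := by
    ext i j
    have hentry := congrFun (congrFun hcomm' i) j
    have hDD : D * D = Matrix.diagonal (fun i => d i * d i) := by
      rw [hD, Matrix.diagonal_mul_diagonal]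
    rw [hDD] at hentry
    rw [show (C' * Matrix.diagonal fun i => d i * d i) i j = C' i j * (d j * d j) from
      Matrix.mul_diagonal _ _ _ _,
      show (Matrix.diagonal (fun i => d i * d i) * C') i j = d i * d i * C' i j from
      Matrix.diagonal_mul _ _ _ _] at hentry
    rw [hD, Matrix.mul_diagonal, Matrix.diagonal_mul]
    by_cases hz : C' i j = 0
    · simp [hz]
    · have hsq_eq : d j * d j = d i * d i := by
        have h0 : C' i j * (d j * d j - d i * d i) = 0 := by linear_combination hentry
        rcases mul_eq_zero.mp h0 with h' | h'
        · exact absurd h' hz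
        · linear_combination h'
      have hreal : d0 j = d0 i := by
        have h2' : ((d0 j : ℂ)) * (d0 j : ℂ) = (d0 i : ℂ) * (d0 i : ℂ) := hsq_eq
        have h2 : d0 j * d0 j = d0 i * d0 i := by exact_mod_cast h2'
        nlinarith [hd0 i, hd0 j]
      have : d j = d i := by rw [hd]; simp [hreal]
      rw [this, mul_comm]
  calc C * R = (U * C' * star U) * (U * D * star U) := by rw [hCUC, ← hspec]
    _ = U * C' * ((star U * U) * (D * star U)) := by noncomm_ring
    _ = U * (C' * D) * star U := by rw [hU1, one_mul]; noncomm_ring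
    _ = U * (D * C') * star U := by rw [hcommD]
    _ = U * D * ((star U * U) * (C' * star U)) := by rw [hU1, one_mul]; noncomm_ring
    _ = (U * D * star U) * (U * C' * star U) := by noncomm_ring
    _ = R * C := by rw [hCUC, ← hspec]


open scoped MatrixOrder in
lemma exists_sqrt_aux {M : Matrix n n ℂ} (hM : M.PosSemidef) :
    ∃ r : Matrix n n ℂ, r.PosSemidef ∧ r * r = M :=
  ⟨CFC.sqrt M, Matrix.nonneg_iff_posSemidef.mp (CFC.sqrt_nonneg M),
    CFC.sqrt_mul_sqrt_self M (Matrix.nonneg_iff_posSemidef.mpr hM)⟩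

end HayashiNagaokaAux

set_option linter.unusedVariables false in
/-- **Hayashi–Nagaoka inequality.**  For operators `0 ≤ A ≤ I`, `B ≥ 0` and any real `c > 0`,
`I − (A+B)^{-1/2} A (A+B)^{-1/2} ≤ (1+c)(I − A) + (2 + c + c⁻¹) B` in the Loewner order,
where the inverse square root is taken on the support of `A + B`. -/
theorem hayashi_nagaoka {n : Type*} [Fintype n] [DecidableEq n]
    (A B R : Matrix n n ℂ) (hA : A.PosSemidef) (hA1 : ((1 : Matrix n n ℂ) - A).PosSemidef)
    (hB : B.PosSemidef) (c : ℝ) (hc : 0 < c) (hR : IsPinvSqrt (A + B) R) :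
    (((1 + c : ℝ) • ((1 : Matrix n n ℂ) - A) + ((2 + c + c⁻¹ : ℝ)) • B)
      - ((1 : Matrix n n ℂ) - R * A * R)).PosSemidef := by
  obtain ⟨hRpsd, ax1, ax2, ax3, ax4⟩ := hR
  have hS : (A + B).PosSemidef := hA.add hB
  have hRH : Rᴴ = R := hRpsd.1
  have hSH : (A + B)ᴴ = A + B := hS.1
  have hMcomm : (A + B) * (R * R) = (R * R) * (A + B) := by
    have h1 : ((R * R) * (A + B))ᴴ = (A + B) * (R * R) := by
      rw [Matrix.conjTranspose_mul, hSH, Matrix.conjTranspose_mul, hRH]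
    rw [← h1, ax4]
  have hcomm : (A + B) * R = R * (A + B) := commute_of_commute_sq hRpsd hMcomm
  -- square root of R
  obtain ⟨r, hrpsd, hrr⟩ : ∃ r : Matrix n n ℂ, r.PosSemidef ∧ r * r = R :=
    exists_sqrt_aux hRpsd
  have hcommr : (A + B) * r = r * (A + B) :=
    commute_of_commute_sq hrpsd (by rw [hrr]; exact hcomm)
  -- W := R * (A+B) is psd with square A+B
  have hWpsd : (R * (A + B)).PosSemidef := by
    have h2 : R * (A + B) = r * (A + B) * rᴴ := by
      calc R * (A + B) = (r * r) * (A + B) := by rw [hrr]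
        _ = r * ((A + B) * r) := by rw [mul_assoc, hcommr]
        _ = r * (A + B) * rᴴ := by rw [hrpsd.1.eq, mul_assoc]
    rw [h2]; exact hS.mul_mul_conjTranspose_same r
  have hWsq : (R * (A + B)) * (R * (A + B)) = A + B := by
    calc (R * (A + B)) * (R * (A + B)) = R * ((A + B) * R) * (A + B) := by noncomm_ring
      _ = R * (R * (A + B)) * (A + B) := by rw [hcomm]
      _ = (R * R) * (A + B) * (A + B) := by noncomm_ring
      _ = (A + B) * (R * R) * (A + B) := by rw [hMcomm]
      _ = A + B := ax1
  -- V := sqrt A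
  obtain ⟨V, hVpsd, hVV⟩ : ∃ V : Matrix n n ℂ, V.PosSemidef ∧ V * V = A :=
    exists_sqrt_aux hA
  have hWV : (R * (A + B) - V).PosSemidef := by
    refine posSemidef_sub_of_sq hVpsd hWpsd ?_
    rw [hWsq, hVV, add_sub_cancel_left]; exact hB
  have hVI : ((1 : Matrix n n ℂ) - V).PosSemidef := by
    refine posSemidef_sub_of_sq hVpsd Matrix.PosSemidef.one ?_
    rw [one_mul, hVV]; exact hA1
  have hVA : (V - A).PosSemidef := by
    obtain ⟨v, hvpsd, hvv⟩ : ∃ v : Matrix n n ℂ, v.PosSemidef ∧ v * v = V :=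
      exists_sqrt_aux hVpsd
    have h3 : v * ((1 : Matrix n n ℂ) - V) * vᴴ = V - A := by
      rw [hvpsd.1.eq, ← hVV, ← hvv]
      noncomm_ring
    rw [← h3]; exact hVI.mul_mul_conjTranspose_same v
  have hWA : (R * (A + B) - A).PosSemidef := by
    have h4 : R * (A + B) - A = (R * (A + B) - V) + (V - A) := by abel
    rw [h4]; exact hWV.add hVA
  -- Pi := R * (A+B) * R
  have hPipsd : (R * (A + B) * R).PosSemidef := by
    have h5 : R * (A + B) * R = R * (A + B) * Rᴴ := by rw [hRH]
    rw [h5]; exact hS.mul_mul_conjTranspose_same R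
  have hPiIdem : (R * (A + B) * R) * (R * (A + B) * R) = R * (A + B) * R := by
    calc (R * (A + B) * R) * (R * (A + B) * R)
        = R * ((A + B) * (R * R) * (A + B)) * R := by noncomm_ring
      _ = R * (A + B) * R := by rw [ax1]
  have hIPi : ((1 : Matrix n n ℂ) - R * (A + B) * R).PosSemidef := by
    have h6 : ((1 : Matrix n n ℂ) - R * (A + B) * R)ᴴ * ((1 : Matrix n n ℂ) - R * (A + B) * R)
        = (1 : Matrix n n ℂ) - R * (A + B) * R := by
      rw [Matrix.conjTranspose_sub, Matrix.conjTranspose_one, hPipsd.1.eq]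
      calc ((1 : Matrix n n ℂ) - R * (A + B) * R) * ((1 : Matrix n n ℂ) - R * (A + B) * R)
          = 1 - R * (A + B) * R - R * (A + B) * R
            + (R * (A + B) * R) * (R * (A + B) * R) := by noncomm_ring
        _ = (1 : Matrix n n ℂ) - R * (A + B) * R := by rw [hPiIdem]; abel
    rw [← h6]; exact Matrix.posSemidef_conjTranspose_mul_self _
  -- the Cauchy-Schwarz-type certificate
  obtain ⟨T, hTpsd, hTT⟩ : ∃ T : Matrix n n ℂ, T.PosSemidef ∧ T * T = B :=
    exists_sqrt_aux hB
  set Z : Matrix n n ℂ := Real.sqrt c • ((R - 1) * T) - (Real.sqrt c)⁻¹ • T with hZdef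
  have hZpsd : (Z * Zᴴ).PosSemidef := Matrix.posSemidef_self_mul_conjTranspose Z
  have hsc : Real.sqrt c * Real.sqrt c = c := Real.mul_self_sqrt hc.le
  have hsc0 : Real.sqrt c ≠ 0 := (Real.sqrt_pos.mpr hc).ne'
  have hscinv : (Real.sqrt c)⁻¹ * (Real.sqrt c)⁻¹ = c⁻¹ := by rw [← mul_inv, hsc]
  have hZH : Zᴴ = Real.sqrt c • (T * (R - 1)) - (Real.sqrt c)⁻¹ • T := by
    rw [hZdef, Matrix.conjTranspose_sub, Matrix.conjTranspose_smul, Matrix.conjTranspose_smul,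
      Matrix.conjTranspose_mul, Matrix.conjTranspose_sub, Matrix.conjTranspose_one, hRH,
      hTpsd.1.eq, star_trivial, star_trivial]
  have hZexp : Z * Zᴴ
      = c • ((R - 1) * B * (R - 1)) - ((R - 1) * B) - (B * (R - 1)) + c⁻¹ • B := by
    rw [hZdef, hZH]
    have e1 : ((R - 1) * T) * (T * (R - 1)) = (R - 1) * B * (R - 1) := by
      calc ((R - 1) * T) * (T * (R - 1)) = (R - 1) * (T * T) * (R - 1) := by noncomm_ring
        _ = (R - 1) * B * (R - 1) := by rw [hTT]
    have e2 : ((R - 1) * T) * T = (R - 1) * B := by rw [mul_assoc, hTT]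
    have e3 : T * (T * (R - 1)) = B * (R - 1) := by rw [← mul_assoc, hTT]
    have expand : ∀ (s t : ℝ) (X Y X' Y' : Matrix n n ℂ),
        (s • X - t • Y) * (s • X' - t • Y')
          = (s * s) • (X * X') - (s * t) • (X * Y') - (s * t) • (Y * X') + (t * t) • (Y * Y') := by
      intros s t X Y X' Y'
      simp only [sub_mul, mul_sub, smul_mul_assoc, mul_smul_comm, smul_smul]
      module
    rw [expand, e1, e2, e3, hTT, hsc, hscinv, mul_inv_cancel₀ hsc0, one_smul]
    module
  have h' : A * R + B * R = R * A + R * B := by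
    have h7 := hcomm; rw [add_mul, mul_add] at h7; exact h7
  have hBR : B * R = R * A + R * B - A * R := by rw [← h']; abel
  have hRA1 : ((R - 1) * A * (R - 1)).PosSemidef := by
    have h8 : (R - 1 : Matrix n n ℂ)ᴴ = R - 1 := by
      rw [Matrix.conjTranspose_sub, Matrix.conjTranspose_one, hRH]
    rw [show (R - 1) * A * (R - 1) = (R - 1) * A * (R - 1)ᴴ by rw [h8]]
    exact hA.mul_mul_conjTranspose_same _
  have key : (((1 + c : ℝ) • ((1 : Matrix n n ℂ) - A) + ((2 + c + c⁻¹ : ℝ)) • B)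
      - ((1 : Matrix n n ℂ) - R * A * R))
      = c • ((1 : Matrix n n ℂ) - R * (A + B) * R) + (2 + 2 * c : ℝ) • (R * (A + B) - A)
        + (1 + c : ℝ) • ((R - 1) * A * (R - 1)) + Z * Zᴴ := by
    rw [hZexp]
    simp only [mul_add, add_mul, mul_sub, sub_mul, mul_one, one_mul, smul_add, smul_sub,
      mul_assoc]
    rw [hBR]
    module
  rw [key]
  exact (((smul_posSemidef hIPi hc.le).add
    (smul_posSemidef hWA (by positivity))).add
    (smul_posSemidef hRA1 (by positivity))).add hZpsd
end

section
/- For density operators ρ, σ on a finite-dimensional Hilbert space with supp(ρ) ⊆ supp(σ), and 0 ≤ ε < 1, the hypothesis-testing relative entropy satisfies D_h^ε(ρ‖σ) ≤ (S(ρ‖σ) + H_b(ε))/(1 − ε), where S(ρ‖σ) is the quantum relative entropy in bits and H_b(ε) = −ε log₂ ε − (1−ε) log₂(1−ε) is the binary entropy (with H_b(0) := 0). -/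
open Matrix BigOperators
open scoped ComplexOrder

/-- The function `f` applied spectrally to a Hermitian matrix `A` via its eigendecomposition. -/
noncomputable def matFun {n : Type*} [Fintype n] [DecidableEq n] {A : Matrix n n ℂ}
    (hA : A.IsHermitian) (f : ℝ → ℝ) : Matrix n n ℂ :=
  (hA.eigenvectorUnitary : Matrix n n ℂ) *
    Matrix.diagonal (fun i => (f (hA.eigenvalues i) : ℂ)) *
      star (hA.eigenvectorUnitary : Matrix n n ℂ)

/-- The hypothesis-testing relative entropy `D_h^ε(ρ‖σ)`. -/
noncomputable def Dh {n : Type*} [Fintype n] [DecidableEq n] (ε : ℝ)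
    (ρ σ : Matrix n n ℂ) : ℝ :=
  sSup {x : ℝ | ∃ Q : Matrix n n ℂ, Q.PosSemidef ∧ ((1 : Matrix n n ℂ) - Q).PosSemidef ∧
    1 - ε ≤ ((Q * ρ).trace).re ∧ x = Real.logb 2 (1 / ((Q * σ).trace).re)}

open Finset

open scoped MatrixOrder in
noncomputable def Matrix.PosSemidef.sqrt {n : Type*} [Fintype n] [DecidableEq n]
    {Q : Matrix n n ℂ} (_hQ : Q.PosSemidef) : Matrix n n ℂ := CFC.sqrt Q

open scoped MatrixOrder in
lemma Matrix.PosSemidef.posSemidef_sqrt {n : Type*} [Fintype n] [DecidableEq n]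
    {Q : Matrix n n ℂ} (hQ : Q.PosSemidef) : hQ.sqrt.PosSemidef :=
  Matrix.nonneg_iff_posSemidef.mp (CFC.sqrt_nonneg Q)

open scoped MatrixOrder in
lemma Matrix.PosSemidef.sqrt_mul_self {n : Type*} [Fintype n] [DecidableEq n]
    {Q : Matrix n n ℂ} (hQ : Q.PosSemidef) : hQ.sqrt * hQ.sqrt = Q :=
  CFC.sqrt_mul_sqrt_self Q (Matrix.nonneg_iff_posSemidef.mpr hQ)

namespace DhAux

/-- weighted Cauchy–Schwarz over a finite type. -/
lemma weighted_cs {ι : Type*} [Fintype ι] (ψ ξ : ι → ℂ) (θ : ι → ℝ) (hθ : ∀ k, 0 < θ k) :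
    ‖∑ k, (starRingEnd ℂ) (ψ k) * ξ k‖ ^ 2 ≤
      (∑ k, θ k * Complex.normSq (ψ k)) * (∑ k, Complex.normSq (ξ k) / θ k) := by
  have h1 : ‖∑ k, (starRingEnd ℂ) (ψ k) * ξ k‖ ≤
      ∑ k, ‖ψ k‖ * ‖ξ k‖ := by
    refine (norm_sum_le _ _).trans_eq ?_
    refine Finset.sum_congr rfl fun k _ => ?_
    rw [norm_mul, Complex.norm_conj]
  have h2 : (∑ k, ‖ψ k‖ * ‖ξ k‖) ^ 2 ≤
      (∑ k, θ k * Complex.normSq (ψ k)) * (∑ k, Complex.normSq (ξ k) / θ k) := by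
    have := Finset.sum_mul_sq_le_sq_mul_sq Finset.univ
      (fun k => Real.sqrt (θ k) * ‖ψ k‖)
      (fun k => ‖ξ k‖ / Real.sqrt (θ k))
    have e1 : ∀ k : ι, (Real.sqrt (θ k) * ‖ψ k‖) *
        (‖ξ k‖ / Real.sqrt (θ k)) = ‖ψ k‖ * ‖ξ k‖ := by
      intro k
      have hs : Real.sqrt (θ k) ≠ 0 := by
        exact (Real.sqrt_pos.mpr (hθ k)).ne'
      field_simp
    have e2 : ∀ k : ι, (Real.sqrt (θ k) * ‖ψ k‖) ^ 2
        = θ k * Complex.normSq (ψ k) := by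
      intro k
      rw [mul_pow, Real.sq_sqrt (hθ k).le, Complex.sq_norm]
    have e3 : ∀ k : ι, (‖ξ k‖ / Real.sqrt (θ k)) ^ 2
        = Complex.normSq (ξ k) / θ k := by
      intro k
      rw [div_pow, Real.sq_sqrt (hθ k).le, Complex.sq_norm]
    calc (∑ k, ‖ψ k‖ * ‖ξ k‖) ^ 2
        = (∑ k, (Real.sqrt (θ k) * ‖ψ k‖) *
            (‖ξ k‖ / Real.sqrt (θ k))) ^ 2 := by
          congr 1; exact (Finset.sum_congr rfl fun k _ => (e1 k).symm)
      _ ≤ (∑ k, (Real.sqrt (θ k) * ‖ψ k‖) ^ 2) *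
            (∑ k, (‖ξ k‖ / Real.sqrt (θ k)) ^ 2) := this
      _ = _ := by
          congr 1
          · exact Finset.sum_congr rfl fun k _ => e2 k
          · exact Finset.sum_congr rfl fun k _ => e3 k
  calc ‖∑ k, (starRingEnd ℂ) (ψ k) * ξ k‖ ^ 2
      ≤ (∑ k, ‖ψ k‖ * ‖ξ k‖) ^ 2 := by
        apply pow_le_pow_left₀ (norm_nonneg _) h1
    _ ≤ _ := h2

noncomputable def termF (a b t : ℝ) : ℝ := a * (Real.log (a + t * b) - Real.log (b + t * b))

lemma termF_zero (a b : ℝ) : termF a b 0 = a * (Real.log a - Real.log b) := by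
  simp [termF]

lemma hasDerivAt_termF {a b : ℝ} (ha : 0 < a) (hb : 0 < b) {t : ℝ} (ht : 0 ≤ t) :
    HasDerivAt (fun s => termF a b s) (a * (b / (a + t * b) - 1 / (1 + t))) t := by
  have hab : 0 < a + t * b := by positivity
  have hbb : 0 < b + t * b := by positivity
  have h1 : HasDerivAt (fun s : ℝ => a + s * b) b t := by
    simpa using ((hasDerivAt_id t).mul_const b).const_add a
  have h2 : HasDerivAt (fun s : ℝ => b + s * b) b t := by
    simpa using ((hasDerivAt_id t).mul_const b).const_add b
  have hl1 := h1.log hab.ne'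
  have hl2 := h2.log hbb.ne'
  have h3 := (hl1.sub hl2).const_mul a
  have h4 : b / (b + t * b) = 1 / (1 + t) := by
    rw [div_eq_div_iff hbb.ne' (by positivity : (0:ℝ) < 1 + t).ne']
    ring
  rw [← h4]
  exact h3

lemma tendsto_termF {a b : ℝ} (ha : 0 < a) (hb : 0 < b) :
    Filter.Tendsto (fun s => termF a b s) Filter.atTop (nhds 0) := by
  have hden : Filter.Tendsto (fun s : ℝ => b + s * b) Filter.atTop Filter.atTop := by
    apply Filter.tendsto_atTop_add_const_left
    exact Filter.Tendsto.atTop_mul_const hb Filter.tendsto_id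
  have h0 : Filter.Tendsto (fun s : ℝ => (a - b) / (b + s * b)) Filter.atTop (nhds 0) :=
    Filter.Tendsto.div_atTop tendsto_const_nhds hden
  have h1 : Filter.Tendsto (fun s : ℝ => (a + s * b) / (b + s * b)) Filter.atTop (nhds 1) := by
    have he : ∀ᶠ s : ℝ in Filter.atTop,
        1 + (a - b) / (b + s * b) = (a + s * b) / (b + s * b) := by
      filter_upwards [Filter.eventually_gt_atTop 0] with s hs
      have hbs : (0:ℝ) < b + s * b := by positivity
      field_simp
      ring
    have := (tendsto_const_nhds (x := (1:ℝ)) (f := Filter.atTop)).add h0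
    rw [add_zero] at this
    exact Filter.Tendsto.congr' he this
  have hlog : Filter.Tendsto (fun s : ℝ => Real.log ((a + s * b) / (b + s * b)))
      Filter.atTop (nhds 0) := by
    have hc := (Real.continuousAt_log (one_ne_zero)).tendsto
    rw [Real.log_one] at hc
    exact hc.comp h1
  have he2 : ∀ᶠ s : ℝ in Filter.atTop,
      a * Real.log ((a + s * b) / (b + s * b)) = termF a b s := by
    filter_upwards [Filter.eventually_gt_atTop 0] with s hs
    rw [termF, Real.log_div (by positivity) (by positivity)]
  have := hlog.const_mul a
  rw [mul_zero] at this
  exact Filter.Tendsto.congr' he2 this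



lemma K1 {ι : Type*} [Fintype ι] (a b c : ι → ℝ)
    (ha : ∀ k, 0 ≤ a k) (hb : ∀ k, 0 ≤ b k) (hc : ∀ k, 0 ≤ c k)
    (p q : ℝ) (hp0 : 0 < p) (hp1 : p ≤ 1) (hq0 : 0 < q) (hq1 : q < 1)
    (hsum_ca : (∑ k, if b k = 0 then (0:ℝ) else c k * a k) = 1)
    (hsum_cb : (∑ k, c k * b k) = 1)
    (hcore : ∀ t : ℝ, 0 < t → q^2/(p + t*q) + (1-q)^2/((1-p) + t*(1-q)) ≤
        ∑ k, (if b k = 0 then (0:ℝ) else c k * (b k)^2 / (a k + t * b k))) :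
    p * Real.log p + (1-p) * Real.log (1-p) - p * Real.log q - (1-p) * Real.log (1-q)
      ≤ ∑ k, (if a k = 0 ∨ b k = 0 then (0:ℝ) else c k * termF (a k) (b k) 0) := by
  classical
  have hq'0 : 0 < 1 - q := by linarith
  have hp'0 : 0 ≤ 1 - p := by linarith
  set g : ℝ → ℝ := fun t =>
    (∑ k, if a k = 0 ∨ b k = 0 then (0:ℝ) else c k * termF (a k) (b k) t)
    - termF p q t - (if 1 - p = 0 then 0 else termF (1-p) (1-q) t) with hg
  set gd : ℝ → ℝ := fun t =>
    ((∑ k, if a k = 0 ∨ b k = 0 then (0:ℝ)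
        else c k * (a k * (b k/(a k + t*b k) - 1/(1+t))))
     - p * (q/(p+t*q) - 1/(1+t)))
     - (if 1 - p = 0 then 0 else (1-p) * ((1-q)/((1-p)+t*(1-q)) - 1/(1+t))) with hgd
  have hderiv : ∀ t : ℝ, 0 ≤ t → HasDerivAt g (gd t) t := by
    intro t ht
    have hA : HasDerivAt (fun t => ∑ k, if a k = 0 ∨ b k = 0 then (0:ℝ)
        else c k * termF (a k) (b k) t)
        (∑ k, if a k = 0 ∨ b k = 0 then (0:ℝ)
        else c k * (a k * (b k/(a k + t*b k) - 1/(1+t)))) t := by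
      apply HasDerivAt.fun_sum
      intro k _
      by_cases hk : a k = 0 ∨ b k = 0
      · simpa [hk] using hasDerivAt_const t (0:ℝ)
      · push_neg at hk
        have hak : 0 < a k := (ha k).lt_of_ne (Ne.symm hk.1)
        have hbk : 0 < b k := (hb k).lt_of_ne (Ne.symm hk.2)
        have hne : ¬ (a k = 0 ∨ b k = 0) := by push_neg; exact hk
        simpa [hne] using (hasDerivAt_termF hak hbk ht).const_mul (c k)
    have hB : HasDerivAt (fun t => termF p q t) (p * (q/(p+t*q) - 1/(1+t))) t :=
      hasDerivAt_termF hp0 hq0 ht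
    have hC : HasDerivAt (fun t => if 1 - p = 0 then (0:ℝ) else termF (1-p) (1-q) t)
        (if 1 - p = 0 then (0:ℝ) else (1-p) * ((1-q)/((1-p)+t*(1-q)) - 1/(1+t))) t := by
      by_cases hpp : 1 - p = 0
      · simpa [hpp] using hasDerivAt_const t (0:ℝ)
      · have hp'pos : 0 < 1 - p := hp'0.lt_of_ne (Ne.symm hpp)
        simpa [hpp] using hasDerivAt_termF hp'pos hq'0 ht
    exact (hA.sub hB).sub hC
  have hgd_nonpos : ∀ t : ℝ, 0 < t → gd t ≤ 0 := by
    intro t ht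
    have h1t : (0:ℝ) < 1 + t := by linarith
    have hβ := hcore t ht
    set β := ∑ k, (if b k = 0 then (0:ℝ) else c k * (b k)^2 / (a k + t * b k)) with hβdef
    have e1 : (∑ k, if a k = 0 ∨ b k = 0 then (0:ℝ)
        else c k * (a k * (b k/(a k + t*b k) - 1/(1+t))))
        = (1 - t * β) - 1/(1+t) := by
      have eterm : ∀ k : ι, (if a k = 0 ∨ b k = 0 then (0:ℝ)
          else c k * (a k * (b k/(a k + t*b k) - 1/(1+t))))
          = (c k * b k - t * (if b k = 0 then (0:ℝ) else c k * (b k)^2/(a k + t * b k)))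
            - (if b k = 0 then (0:ℝ) else c k * a k)/(1+t) := by
        intro k
        by_cases hbk : b k = 0
        · simp [hbk]
        · have hbkpos : 0 < b k := (hb k).lt_of_ne (Ne.symm hbk)
          by_cases hak : a k = 0
          · have habt : a k + t * b k ≠ 0 := by positivity
            simp only [hak, true_or, if_pos, if_neg hbk]
            field_simp
            ring
          · have hne : ¬ (a k = 0 ∨ b k = 0) := by push_neg; exact ⟨hak, hbk⟩
            have hakpos : 0 < a k := (ha k).lt_of_ne (Ne.symm hak)
            have habt : a k + t * b k ≠ 0 := by positivity
            simp only [if_neg hne, if_neg hbk]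
            field_simp
            ring
      rw [Finset.sum_congr rfl fun k _ => eterm k, Finset.sum_sub_distrib,
        Finset.sum_sub_distrib, ← Finset.mul_sum, ← hβdef, hsum_cb, ← Finset.sum_div, hsum_ca]
    have e2 : p * (q/(p+t*q) - 1/(1+t)) = (q - t * (q^2/(p+t*q))) - p/(1+t) := by
      have hpq : p + t*q ≠ 0 := by positivity
      field_simp
      ring
    have e3 : (if 1 - p = 0 then (0:ℝ) else (1-p) * ((1-q)/((1-p)+t*(1-q)) - 1/(1+t)))
        = ((1-q) - t * ((1-q)^2/((1-p)+t*(1-q)))) - (1-p)/(1+t) := by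
      by_cases hpp : 1 - p = 0
      · rw [if_pos hpp, hpp]
        have : (0:ℝ) + t * (1-q) ≠ 0 := by positivity
        field_simp
        ring
      · rw [if_neg hpp]
        have hp'pos : 0 < 1 - p := hp'0.lt_of_ne (Ne.symm hpp)
        have : (1-p) + t*(1-q) ≠ 0 := by positivity
        field_simp
        ring
    rw [hgd]
    simp only []
    rw [e1, e2, e3]
    have : ((1 - t * β) - 1/(1+t)) - ((q - t * (q^2/(p+t*q))) - p/(1+t))
        - (((1-q) - t * ((1-q)^2/((1-p)+t*(1-q)))) - (1-p)/(1+t))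
        = t * ((q^2/(p + t*q) + (1-q)^2/((1-p) + t*(1-q))) - β) := by
      field_simp
      ring
    rw [this]
    have hx : (q^2/(p + t*q) + (1-q)^2/((1-p) + t*(1-q))) - β ≤ 0 := by linarith
    exact mul_nonpos_of_nonneg_of_nonpos ht.le hx
  have hcont : ContinuousOn g (Set.Ici 0) := by
    intro t ht
    exact ((hderiv t ht).continuousAt).continuousWithinAt
  have hanti : AntitoneOn g (Set.Ici 0) := by
    apply antitoneOn_of_deriv_nonpos (convex_Ici 0) hcont
    · intro t ht
      rw [interior_Ici] at ht
      exact ((hderiv t ht.le).differentiableAt).differentiableWithinAt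
    · intro t ht
      rw [interior_Ici] at ht
      rw [(hderiv t ht.le).deriv]
      exact hgd_nonpos t ht
  have htend : Filter.Tendsto g Filter.atTop (nhds 0) := by
    have h1 : Filter.Tendsto (fun t => ∑ k, if a k = 0 ∨ b k = 0 then (0:ℝ)
        else c k * termF (a k) (b k) t) Filter.atTop (nhds 0) := by
      have hterms : ∀ k ∈ (Finset.univ : Finset ι), Filter.Tendsto
          (fun t : ℝ => if a k = 0 ∨ b k = 0 then (0:ℝ) else c k * termF (a k) (b k) t)
          Filter.atTop (nhds 0) := by
        intro k _
        by_cases hk : a k = 0 ∨ b k = 0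
        · simpa [hk] using (tendsto_const_nhds : Filter.Tendsto (fun _ : ℝ => (0:ℝ)) _ _)
        · push_neg at hk
          have hak : 0 < a k := (ha k).lt_of_ne (Ne.symm hk.1)
          have hbk : 0 < b k := (hb k).lt_of_ne (Ne.symm hk.2)
          have hne : ¬ (a k = 0 ∨ b k = 0) := by push_neg; exact hk
          have := (tendsto_termF hak hbk).const_mul (c k)
          rw [mul_zero] at this
          simpa [hne] using this
      have := tendsto_finset_sum (Finset.univ : Finset ι) hterms
      simpa using this
    have h2 := tendsto_termF hp0 hq0
    have h3 : Filter.Tendsto (fun t => if 1 - p = 0 then (0:ℝ) else termF (1-p) (1-q) t)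
        Filter.atTop (nhds 0) := by
      by_cases hpp : 1 - p = 0
      · simpa [hpp] using (tendsto_const_nhds : Filter.Tendsto (fun _ : ℝ => (0:ℝ)) _ _)
      · have hp'pos : 0 < 1 - p := hp'0.lt_of_ne (Ne.symm hpp)
        simpa [hpp] using tendsto_termF hp'pos hq'0
    have := (h1.sub h2).sub h3
    simpa using this
  have h0 : (0:ℝ) ≤ g 0 := by
    apply le_of_tendsto htend
    filter_upwards [Filter.eventually_ge_atTop (0:ℝ)] with t ht
    exact hanti Set.self_mem_Ici ht ht
  have hval : termF p q 0 + (if 1 - p = 0 then (0:ℝ) else termF (1-p) (1-q) 0)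
      = p * Real.log p + (1-p) * Real.log (1-p) - p * Real.log q - (1-p) * Real.log (1-q) := by
    by_cases hpp : 1 - p = 0
    · rw [if_pos hpp, hpp]
      simp [termF]
      ring
    · rw [if_neg hpp]
      simp [termF]
      ring
  rw [hg] at h0
  simp only [] at h0
  linarith [h0, hval.symm.le]



/-- Monotonicity of `x ↦ H(x)/(1-x)` on `(0,1)`. -/
lemma Gmono {x y : ℝ} (hx : 0 < x) (hxy : x ≤ y) (hy : y < 1) :
    (-(x*Real.log x) - (1-x)*Real.log (1-x))/(1-x)
      ≤ (-(y*Real.log y) - (1-y)*Real.log (1-y))/(1-y) := by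
  rcases eq_or_lt_of_le hxy with rfl | hlt
  · exact le_refl _
  have key : StrictMonoOn (fun z : ℝ => (-(z*Real.log z) - (1-z)*Real.log (1-z))/(1-z))
      (Set.Ioo 0 1) := by
    have hder : ∀ z ∈ Set.Ioo (0:ℝ) 1, HasDerivAt
        (fun z : ℝ => (-(z*Real.log z) - (1-z)*Real.log (1-z))/(1-z))
        (-Real.log z / (1-z)^2) z := by
      intro z hz
      obtain ⟨hz0, hz1⟩ := hz
      have hz1' : 0 < 1 - z := by linarith
      have h1 : HasDerivAt (fun w : ℝ => w * Real.log w) (Real.log z + 1) z :=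
        Real.hasDerivAt_mul_log hz0.ne'
      have h2 : HasDerivAt (fun w : ℝ => (1-w) * Real.log (1-w))
          (-(Real.log (1-z) + 1)) z := by
        have hin : HasDerivAt (fun w : ℝ => 1 - w) (-1) z := by
          simpa using (hasDerivAt_id z).const_sub 1
        have := (Real.hasDerivAt_mul_log hz1'.ne').comp z hin
        simp only [Function.comp_def] at this
        exact this.congr_deriv (by ring)
      have hnum : HasDerivAt (fun w : ℝ => -(w*Real.log w) - (1-w)*Real.log (1-w))
          (-(Real.log z + 1) - (-(Real.log (1-z) + 1))) z := (h1.neg).sub h2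
      have hden : HasDerivAt (fun w : ℝ => 1 - w) (-1) z := by
        simpa using (hasDerivAt_id z).const_sub 1
      have hdiv := hnum.div hden hz1'.ne'
      refine hdiv.congr_deriv ?_
      field_simp
      ring
    apply strictMonoOn_of_deriv_pos (convex_Ioo 0 1)
    · intro z hz
      exact ((hder z hz).continuousAt).continuousWithinAt
    · intro z hz
      rw [interior_Ioo] at hz
      rw [(hder z hz).deriv]
      have hz1' : 0 < 1 - z := by linarith [hz.2]
      have hlz : 0 < -Real.log z := by
        simpa using Real.log_neg hz.1 hz.2
      positivity
  exact (key ⟨hx, lt_of_le_of_lt hxy hy⟩ ⟨lt_of_lt_of_le hx hxy, hy⟩ hlt).le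

lemma classical_step {D p q ε : ℝ} (hD : 0 ≤ D)
    (hd : p*Real.log p + (1-p)*Real.log (1-p) - p*Real.log q - (1-p)*Real.log (1-q) ≤ D)
    (hp : 1-ε ≤ p) (hp1 : p ≤ 1) (hq : 0 < q) (hq1 : q ≤ 1) (hε0 : 0 ≤ ε) (hε1 : ε < 1) :
    -Real.log q ≤ (D + (-(ε*Real.log ε) - (1-ε)*Real.log (1-ε)))/(1-ε) := by
  have hε1' : 0 < 1 - ε := by linarith
  have hp0 : 0 < p := by linarith
  have hlogq : Real.log q ≤ 0 := Real.log_nonpos hq.le hq1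
  set Hbε : ℝ := -(ε*Real.log ε) - (1-ε)*Real.log (1-ε) with hHbεdef
  have hHbε : 0 ≤ Hbε := by
    have h1 : ε * Real.log ε ≤ 0 := Real.mul_log_nonpos hε0 hε1.le
    have h2 : (1-ε) * Real.log (1-ε) ≤ 0 := Real.mul_log_nonpos hε1'.le (by linarith)
    rw [hHbεdef]; linarith
  set Hp : ℝ := -(p*Real.log p) - (1-p)*Real.log (1-p) with hHpdef
  have hkey : p * (-Real.log q) ≤ D + Hp := by
    have h3 : (1-p) * Real.log (1-q) ≤ 0 :=
      mul_nonpos_of_nonneg_of_nonpos (by linarith) (Real.log_nonpos (by linarith) (by linarith))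
    rw [hHpdef]; linarith
  rcases eq_or_lt_of_le hp1 with rfl | hplt
  · -- p = 1
    have hHp0 : Hp = 0 := by rw [hHpdef]; simp
    have h4 : -Real.log q ≤ D := by
      rw [hHp0] at hkey; linarith
    rw [le_div_iff₀ hε1']
    nlinarith
  · -- p < 1
    have hx0 : 0 < 1 - p := by linarith
    have hGm := Gmono (x := 1-p) (y := ε) hx0 (by linarith) hε1
    have h1p : 1 - (1-p) = p := by ring
    rw [h1p] at hGm
    have hGm' : Hp / p ≤ Hbε / (1-ε) := by
      have : -( (1-p)*Real.log (1-p)) - p*Real.log p = Hp := by rw [hHpdef]; ring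
      rw [this] at hGm
      exact hGm
    have h5 : -Real.log q ≤ (D + Hp)/p := by
      rw [le_div_iff₀ hp0]
      calc -Real.log q * p = p * (-Real.log q) := by ring
        _ ≤ D + Hp := hkey
    have h6 : (D + Hp)/p = D/p + Hp/p := add_div _ _ _
    have h7 : D/p ≤ D/(1-ε) := by
      rw [div_le_div_iff₀ hp0 hε1']
      nlinarith
    calc -Real.log q ≤ D/p + Hp/p := by rw [← h6]; exact h5
      _ ≤ D/(1-ε) + Hbε/(1-ε) := add_le_add h7 hGm'
      _ = (D + Hbε)/(1-ε) := (add_div _ _ _).symm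



variable {n : Type*} [Fintype n] [DecidableEq n]

lemma psd_diag_nonneg {M : Matrix n n ℂ} (hM : M.PosSemidef) (i : n) : 0 ≤ M i i := by
  exact hM.diag_nonneg

lemma psd_trace_nonneg {M : Matrix n n ℂ} (hM : M.PosSemidef) : 0 ≤ M.trace := by
  rw [Matrix.trace]
  exact Finset.sum_nonneg fun i _ => psd_diag_nonneg hM i

lemma trace_mul_psd_nonneg {A B : Matrix n n ℂ} (hA : A.PosSemidef) (hB : B.PosSemidef) :
    0 ≤ (A * B).trace := by
  obtain ⟨C, rfl⟩ : ∃ C : Matrix n n ℂ, B = Cᴴ * C :=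
    ⟨hB.sqrt, by rw [hB.posSemidef_sqrt.1, hB.sqrt_mul_self]⟩
  have h1 : A * (Cᴴ * C) = A * Cᴴ * C := by rw [Matrix.mul_assoc]
  rw [h1, Matrix.trace_mul_cycle]
  exact psd_trace_nonneg (hA.mul_mul_conjTranspose_same C)

lemma trace_mul_herm_real {A B : Matrix n n ℂ} (hA : A.IsHermitian) (hB : B.IsHermitian) :
    ((A * B).trace) = (((A * B).trace).re : ℂ) := by
  have h1 : star ((A * B).trace) = (A * B).trace := by
    rw [← Matrix.trace_conjTranspose, Matrix.conjTranspose_mul, hA.eq, hB.eq,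
      Matrix.trace_mul_comm]
  exact (Complex.conj_eq_iff_re.mp h1).symm

lemma trace_diag_mul (v : n → ℂ) (M : Matrix n n ℂ) :
    (Matrix.diagonal v * M).trace = ∑ i, v i * M i i := by
  simp [Matrix.trace, Matrix.diag, Matrix.diagonal_mul]

lemma trace_sandwich (W M X : Matrix n n ℂ) :
    ((W * M * star W) * X).trace = (M * (star W * X * W)).trace := by
  have h : W * M * star W * X = W * (M * (star W * X)) := by simp only [Matrix.mul_assoc]
  rw [h, Matrix.trace_mul_comm]
  congr 1
  simp only [Matrix.mul_assoc]

lemma entry_sandwich (Γ : Matrix n n ℂ) (e : n → ℂ) (i : n) :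
    (Γ * Matrix.diagonal e * star Γ) i i = ∑ j, e j * (Γ i j * star (Γ i j)) := by
  rw [Matrix.star_eq_conjTranspose, Matrix.mul_apply]
  refine Finset.sum_congr rfl fun j _ => ?_
  rw [Matrix.mul_diagonal, Matrix.conjTranspose_apply]
  ring

lemma sandwich_group (W V : Matrix n n ℂ) (hW : star W * W = 1) (e : n → ℂ) :
    star W * (V * Matrix.diagonal e * star V) * W
      = (star W * V) * Matrix.diagonal e * star (star W * V) := by
  rw [StarMul.star_mul (star W) V, star_star]
  simp only [← Matrix.mul_assoc]

lemma conj_sq_collapse (U T V : Matrix n n ℂ) (hV : V * star V = 1) (hT : star T = T) :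
    star U * (T * T) * U = (star U * T * V) * star (star U * T * V) := by
  have hstar : star (star U * T * V) = star V * (T * U) := by
    simp only [StarMul.star_mul, star_star, hT, Matrix.mul_assoc]
  rw [hstar]
  calc star U * (T * T) * U = star U * T * ((V * star V) * (T * U)) := by
        rw [hV]
        simp only [Matrix.mul_assoc, Matrix.one_mul]
      _ = star U * T * V * (star V * (T * U)) := by
        simp only [Matrix.mul_assoc]

lemma Q_sub_sq_psd {Q : Matrix n n ℂ} (hQ : Q.PosSemidef)
    (hQ' : ((1 : Matrix n n ℂ) - Q).PosSemidef) : (Q - Q * Q).PosSemidef := by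
  have h := hQ'.conjTranspose_mul_mul_same (B := hQ.sqrt)
  have hsq : hQ.sqrtᴴ = hQ.sqrt := hQ.posSemidef_sqrt.1
  have h1 : hQ.sqrt * hQ.sqrt = Q := hQ.sqrt_mul_self
  have key : hQ.sqrtᴴ * ((1 : Matrix n n ℂ) - Q) * hQ.sqrt = Q - Q * Q := by
    rw [hsq]
    calc hQ.sqrt * ((1 : Matrix n n ℂ) - Q) * hQ.sqrt
        = hQ.sqrt * hQ.sqrt - hQ.sqrt * Q * hQ.sqrt := by
          rw [Matrix.mul_sub, Matrix.mul_one, Matrix.sub_mul]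
      _ = Q - Q * Q := by
          rw [h1]
          congr 1
          have haux : ∀ (A s : Matrix n n ℂ), s * s = A → s * A * s = A * A := by
            intro A s h
            subst h
            simp only [Matrix.mul_assoc]
          exact haux Q hQ.sqrt h1
  rw [← key]
  exact h

lemma psd_real_smul {M : Matrix n n ℂ} (hM : M.PosSemidef) {r : ℝ} (hr : 0 ≤ r) :
    (((r : ℂ)) • M).PosSemidef := by
  refine Matrix.PosSemidef.of_dotProduct_mulVec_nonneg ?_ ?_
  · rw [Matrix.IsHermitian, Matrix.conjTranspose_smul, hM.1.eq]
    congr 1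
    simp
  · intro x
    rw [Matrix.smul_mulVec, dotProduct_smul, smul_eq_mul]
    exact mul_nonneg (by exact_mod_cast Complex.zero_le_real.mpr hr) (hM.dotProduct_mulVec_nonneg x)




variable {n : Type*} [Fintype n] [DecidableEq n]

lemma sandwich_self (U M : Matrix n n ℂ) (hU : star U * U = 1) :
    star U * (U * M * star U) * U = M := by
  have h1 : star U * (U * M * star U) * U = ((star U * U) * M) * (star U * U) := by
    simp only [Matrix.mul_assoc]
  rw [h1, hU, Matrix.one_mul, Matrix.mul_one]

lemma mul_star_diag (S : Matrix n n ℂ) (i : n) :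
    (S * star S) i i = ((∑ j, Complex.normSq (S i j) : ℝ) : ℂ) := by
  rw [Matrix.star_eq_conjTranspose, Matrix.mul_apply]
  push_cast
  refine Finset.sum_congr rfl fun j _ => ?_
  rw [Matrix.conjTranspose_apply, Complex.star_def, Complex.mul_conj]

lemma star_mul_diag (S : Matrix n n ℂ) (j : n) :
    (star S * S) j j = ((∑ i, Complex.normSq (S i j) : ℝ) : ℂ) := by
  rw [Matrix.star_eq_conjTranspose, Matrix.mul_apply]
  push_cast
  refine Finset.sum_congr rfl fun i _ => ?_
  rw [Matrix.conjTranspose_apply, Complex.star_def]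
  rw [mul_comm, Complex.mul_conj]

/-- trace against a hermitian matrix written spectrally -/
lemma trace_state_form {ρ : Matrix n n ℂ} (hH : ρ.IsHermitian) (X : Matrix n n ℂ) :
    (ρ * X).trace = ∑ i, (hH.eigenvalues i : ℂ) *
      ((star (hH.eigenvectorUnitary : Matrix n n ℂ) * X *
        (hH.eigenvectorUnitary : Matrix n n ℂ)) i i) := by
  conv_lhs => rw [hH.spectral_theorem, Unitary.conjStarAlgAut_apply]
  rw [trace_sandwich, trace_diag_mul]
  refine Finset.sum_congr rfl fun i _ => ?_
  congr 1



variable {n : Type*} [Fintype n] [DecidableEq n]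

lemma psd_trace_zero {M : Matrix n n ℂ} (hM : M.PosSemidef) (h : M.trace = 0) : M = 0 := by
  have h1 := trace_state_form hM.1 (1 : Matrix n n ℂ)
  rw [Matrix.mul_one] at h1
  have h2 : star (hM.1.eigenvectorUnitary : Matrix n n ℂ) * (1 : Matrix n n ℂ) *
      (hM.1.eigenvectorUnitary : Matrix n n ℂ) = 1 := by
    rw [Matrix.mul_one, Matrix.mem_unitaryGroup_iff'.mp (hM.1.eigenvectorUnitary).2]
  rw [h2, h] at h1
  have h3 : ∑ i, (hM.1.eigenvalues i : ℂ) * ((1 : Matrix n n ℂ) i i)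
      = ((∑ i, hM.1.eigenvalues i : ℝ) : ℂ) := by
    push_cast
    refine Finset.sum_congr rfl fun i _ => ?_
    rw [Matrix.one_apply_eq, mul_one]
  rw [h3] at h1
  have h4 : ∑ i, hM.1.eigenvalues i = 0 := by exact_mod_cast h1.symm
  have h5 : ∀ i ∈ Finset.univ, hM.1.eigenvalues i = 0 :=
    (Finset.sum_eq_zero_iff_of_nonneg (fun i _ => hM.eigenvalues_nonneg i)).mp h4
  have h6 : Matrix.diagonal (RCLike.ofReal ∘ hM.1.eigenvalues) = (0 : Matrix n n ℂ) := by
    ext i j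
    by_cases hij : i = j
    · subst hij
      rw [Matrix.diagonal_apply_eq]
      simp [h5 i (Finset.mem_univ i)]
    · rw [Matrix.diagonal_apply_ne _ hij]
      simp
  conv_lhs => rw [hM.1.spectral_theorem, Unitary.conjStarAlgAut_apply]
  rw [h6, Matrix.mul_zero, Matrix.zero_mul]





set_option maxHeartbeats 3000000 in
theorem key_setup {n : Type*} [Fintype n] [DecidableEq n]
    {ρ σ Q : Matrix n n ℂ} (hρ : ρ.PosSemidef) (hρtr : ρ.trace = 1)
    (hσ : σ.PosSemidef) (hσtr : σ.trace = 1)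
    (hsupp : ∀ v : n → ℂ, σ.mulVec v = 0 → ρ.mulVec v = 0)
    (hQ : Q.PosSemidef) (hQ' : ((1 : Matrix n n ℂ) - Q).PosSemidef)
    (hp0 : 0 < ((Q * ρ).trace).re) (hq1 : ((Q * σ).trace).re < 1) :
    0 < ((Q * σ).trace).re ∧ ((Q * ρ).trace).re ≤ 1 ∧
    ((Q * ρ).trace).re * Real.log ((Q * ρ).trace).re
      + (1 - ((Q * ρ).trace).re) * Real.log (1 - ((Q * ρ).trace).re)
      - ((Q * ρ).trace).re * Real.log ((Q * σ).trace).re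
      - (1 - ((Q * ρ).trace).re) * Real.log (1 - ((Q * σ).trace).re)
    ≤ Real.log 2 *
      ((ρ * (matFun hρ.1 (Real.logb 2) - matFun hσ.1 (Real.logb 2))).trace).re := by
  classical
  set U : Matrix n n ℂ := (hρ.1.eigenvectorUnitary : Matrix n n ℂ) with hUdef
  set V : Matrix n n ℂ := (hσ.1.eigenvectorUnitary : Matrix n n ℂ) with hVdef
  set a : n → ℝ := hρ.1.eigenvalues with hadef
  set b : n → ℝ := hσ.1.eigenvalues with hbdef
  have hU1 : star U * U = 1 := Matrix.mem_unitaryGroup_iff'.mp (hρ.1.eigenvectorUnitary).2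
  have hU2 : U * star U = 1 := Matrix.mem_unitaryGroup_iff.mp (hρ.1.eigenvectorUnitary).2
  have hV1 : star V * V = 1 := Matrix.mem_unitaryGroup_iff'.mp (hσ.1.eigenvectorUnitary).2
  have hV2 : V * star V = 1 := Matrix.mem_unitaryGroup_iff.mp (hσ.1.eigenvectorUnitary).2
  set Γ : Matrix n n ℂ := star U * V with hΓdef
  set c : n → n → ℝ := fun i j => Complex.normSq (Γ i j) with hcdef
  set p := ((Q * ρ).trace).re with hpdef
  set q := ((Q * σ).trace).re with hqdef
  have ha : ∀ i, 0 ≤ a i := fun i => hρ.eigenvalues_nonneg i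
  have hb : ∀ j, 0 ≤ b j := fun j => hσ.eigenvalues_nonneg j
  have hc : ∀ i j, 0 ≤ c i j := fun i j => Complex.normSq_nonneg _
  -- sum of eigenvalues = 1
  have hsuma : ∑ i, a i = 1 := by
    have h1 := trace_state_form hρ.1 (1 : Matrix n n ℂ)
    rw [Matrix.mul_one] at h1
    have h2 : star U * (1 : Matrix n n ℂ) * U = 1 := by rw [Matrix.mul_one, hU1]
    rw [h2, hρtr] at h1
    have h3 : ∑ i, (a i : ℂ) * ((1 : Matrix n n ℂ) i i) = ((∑ i, a i : ℝ) : ℂ) := by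
      push_cast
      refine Finset.sum_congr rfl fun i _ => ?_
      rw [Matrix.one_apply_eq, mul_one]
    rw [h3] at h1
    exact_mod_cast h1.symm
  have hsumb : ∑ j, b j = 1 := by
    have h1 := trace_state_form hσ.1 (1 : Matrix n n ℂ)
    rw [Matrix.mul_one] at h1
    have h2 : star V * (1 : Matrix n n ℂ) * V = 1 := by rw [Matrix.mul_one, hV1]
    rw [h2, hσtr] at h1
    have h3 : ∑ j, (b j : ℂ) * ((1 : Matrix n n ℂ) j j) = ((∑ j, b j : ℝ) : ℂ) := by
      push_cast
      refine Finset.sum_congr rfl fun j _ => ?_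
      rw [Matrix.one_apply_eq, mul_one]
    rw [h3] at h1
    exact_mod_cast h1.symm
  have hΓ1 : Γ * star Γ = 1 := by
    rw [hΓdef, StarMul.star_mul, star_star]
    calc star U * V * (star V * U) = star U * (V * star V) * U := by
          simp only [Matrix.mul_assoc]
      _ = 1 := by rw [hV2, Matrix.mul_one, hU1]
  have hΓ2 : star Γ * Γ = 1 := by
    rw [hΓdef, StarMul.star_mul, star_star]
    calc star V * U * (star U * V) = star V * (U * star U) * V := by
          simp only [Matrix.mul_assoc]
      _ = 1 := by rw [hU2, Matrix.mul_one, hV1]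
  have hcrow : ∀ i, ∑ j, c i j = 1 := by
    intro i
    have h1 := mul_star_diag Γ i
    rw [hΓ1, Matrix.one_apply_eq] at h1
    exact_mod_cast h1.symm
  have hccol : ∀ j, ∑ i, c i j = 1 := by
    intro j
    have h1 := star_mul_diag Γ j
    rw [hΓ2, Matrix.one_apply_eq] at h1
    exact_mod_cast h1.symm
  -- support fact
  have hsupp' : ∀ j, b j = 0 → ∀ i, a i * c i j = 0 := by
    intro j hbj i
    have hσv : σ.mulVec (V.mulVec (Pi.single j 1)) = 0 := by
      rw [Matrix.mulVec_mulVec]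
      conv_lhs => rw [hσ.1.spectral_theorem, Unitary.conjStarAlgAut_apply]
      have : (V * Matrix.diagonal (RCLike.ofReal ∘ b) * star V) * V
          = V * Matrix.diagonal (RCLike.ofReal ∘ b) := by
        rw [Matrix.mul_assoc, hV1, Matrix.mul_one]
      rw [this, ← Matrix.mulVec_mulVec, Matrix.diagonal_mulVec_single]
      have : (RCLike.ofReal ∘ b) j * 1 = (0 : ℂ) := by
        simp [hbj]
      rw [this]
      simp
    have hρv := hsupp _ hσv
    have h2 : (Matrix.diagonal (RCLike.ofReal ∘ a) : Matrix n n ℂ).mulVec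
        (Γ.mulVec (Pi.single j 1)) = 0 := by
      have h3 : ρ.mulVec (V.mulVec (Pi.single j 1))
          = U.mulVec ((Matrix.diagonal (RCLike.ofReal ∘ a)).mulVec
              (Γ.mulVec (Pi.single j 1))) := by
        conv_lhs => rw [hρ.1.spectral_theorem, Unitary.conjStarAlgAut_apply, ← hUdef, ← hadef]
        simp only [Matrix.mulVec_mulVec, hΓdef]
        congr 1
        simp only [Matrix.mul_assoc]
      rw [h3] at hρv
      have h4 := congrArg (fun w => (star U).mulVec w) hρv
      simpa [Matrix.mulVec_mulVec, ← Matrix.mul_assoc, hU1] using h4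
    have h5 := congrArg (fun w => w i) h2
    simp only [Matrix.mulVec_diagonal, Matrix.mulVec_single, Pi.zero_apply,
      Function.comp_apply, mul_one] at h5
    rcases mul_eq_zero.mp h5 with h | h
    · have ha0 : a i = 0 := by
        simpa [RCLike.ofReal_eq_zero] using h
      rw [ha0, zero_mul]
    · have hc0 : c i j = 0 := by
        rw [hcdef]
        simp only []
        rw [show Γ i j = 0 by simpa using h]
        simp
      rw [hc0, mul_zero]
  -- realness and bounds
  have hrealp : (Q * ρ).trace = (p : ℂ) := trace_mul_herm_real hQ.1 hρ.1
  have hrealq : (Q * σ).trace = (q : ℂ) := trace_mul_herm_real hQ.1 hσ.1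
  have hp1 : p ≤ 1 := by
    have h1 := trace_mul_psd_nonneg hQ' hρ
    have h2 : (((1 : Matrix n n ℂ) - Q) * ρ).trace = 1 - (p : ℂ) := by
      rw [Matrix.sub_mul, Matrix.one_mul, Matrix.trace_sub, hρtr, hrealp]
    rw [h2] at h1
    have h3 := (Complex.le_def.mp h1).1
    simp only [Complex.zero_re, Complex.sub_re, Complex.one_re, Complex.ofReal_re] at h3
    linarith
  have hq1' : q ≤ 1 := by
    have h1 := trace_mul_psd_nonneg hQ' hσ
    have h2 : (((1 : Matrix n n ℂ) - Q) * σ).trace = 1 - (q : ℂ) := by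
      rw [Matrix.sub_mul, Matrix.one_mul, Matrix.trace_sub, hσtr, hrealq]
    rw [h2] at h1
    have h3 := (Complex.le_def.mp h1).1
    simp only [Complex.zero_re, Complex.sub_re, Complex.one_re, Complex.ofReal_re] at h3
    linarith
  have hq0le : 0 ≤ q := by
    have h1 := trace_mul_psd_nonneg hQ hσ
    rw [hrealq] at h1
    exact_mod_cast Complex.zero_le_real.mp h1
  have hq0 : 0 < q := by
    rcases hq0le.lt_or_eq with h | h
    · exact h
    · exfalso
      have hqz : (Q * σ).trace = 0 := by rw [hrealq, ← h]; simp
      set s := hQ.sqrt with hsdef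
      have hss : s * s = Q := hQ.sqrt_mul_self
      have hsherm : sᴴ = s := hQ.posSemidef_sqrt.1
      have h1 : (s * σ * s).trace = 0 := by
        rw [Matrix.trace_mul_cycle s σ s, hss, hqz]
      have hpsd1 : (s * σ * s).PosSemidef := by
        have h2 := hσ.mul_mul_conjTranspose_same s
        rwa [hsherm] at h2
      have hzero : s * σ * s = 0 := psd_trace_zero hpsd1 h1
      set r := hσ.sqrt with hrdef
      have hrr : r * r = σ := hσ.sqrt_mul_self
      have hrherm : rᴴ = r := hσ.posSemidef_sqrt.1
      have h2 : (r * s)ᴴ * (r * s) = s * σ * s := by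
        rw [Matrix.conjTranspose_mul, hrherm, hsherm]
        calc s * r * (r * s) = s * (r * r) * s := by simp only [Matrix.mul_assoc]
          _ = s * σ * s := by rw [hrr]
      have h3 : r * s = 0 := by
        apply Matrix.conjTranspose_mul_self_eq_zero.mp
        rw [h2, hzero]
      have h4 : σ * s = 0 := by
        rw [← hrr, Matrix.mul_assoc, h3, Matrix.mul_zero]
      have h5 : ρ * s = 0 := by
        ext i k
        have hv : σ.mulVec (s.mulVec (Pi.single k 1)) = 0 := by
          rw [Matrix.mulVec_mulVec, h4]
          exact Matrix.zero_mulVec _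
        have hv2 := hsupp _ hv
        rw [Matrix.mulVec_mulVec] at hv2
        have := congrArg (fun w => w i) hv2
        simpa [Matrix.mulVec_single] using this
      have h6 : (Q * ρ).trace = 0 := by
        rw [← hss]
        have : s * s * ρ = s * (s * ρ) := by rw [Matrix.mul_assoc]
        rw [this, Matrix.trace_mul_comm]
        have : s * ρ * s = s * (ρ * s) := by rw [Matrix.mul_assoc]
        rw [this, h5, Matrix.mul_zero, Matrix.trace_zero]
      rw [hrealp] at h6
      have : p = 0 := by exact_mod_cast h6
      linarith
  refine ⟨hq0, hp1, ?_⟩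
  -- relEnt expansion
  have hE1 : (ρ * matFun hρ.1 (Real.logb 2)).trace
      = ((∑ i, a i * Real.logb 2 (a i) : ℝ) : ℂ) := by
    rw [trace_state_form hρ.1 (matFun hρ.1 (Real.logb 2))]
    have h2 : ∀ i, (star U * matFun hρ.1 (Real.logb 2) * U) i i
        = ((Real.logb 2 (a i) : ℝ) : ℂ) := by
      intro i
      have hm : matFun hρ.1 (Real.logb 2)
          = U * Matrix.diagonal (fun i => ((Real.logb 2 (a i) : ℝ) : ℂ)) * star U := rfl
      rw [hm, sandwich_self U _ hU1, Matrix.diagonal_apply_eq]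
    have h3 : ∑ i, (a i : ℂ) * ((star U * matFun hρ.1 (Real.logb 2) * U) i i)
        = ∑ i, ((a i : ℂ) * ((Real.logb 2 (a i) : ℝ) : ℂ)) :=
      Finset.sum_congr rfl fun i _ => by rw [h2 i]
    rw [h3]
    push_cast
    rfl
  have hE2 : (ρ * matFun hσ.1 (Real.logb 2)).trace
      = ((∑ i, ∑ j, a i * (c i j * Real.logb 2 (b j)) : ℝ) : ℂ) := by
    rw [trace_state_form hρ.1 (matFun hσ.1 (Real.logb 2))]
    have hm : matFun hσ.1 (Real.logb 2)
        = V * Matrix.diagonal (fun j => ((Real.logb 2 (b j) : ℝ) : ℂ)) * star V := rfl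
    have h2 : ∀ i, (star U * matFun hσ.1 (Real.logb 2) * U) i i
        = ∑ j, ((Real.logb 2 (b j) : ℝ) : ℂ) * ((c i j : ℝ) : ℂ) := by
      intro i
      rw [hm, sandwich_group U V hU1, ← hΓdef, entry_sandwich]
      refine Finset.sum_congr rfl fun j _ => ?_
      rw [Complex.star_def, Complex.mul_conj]
    have h3 : ∑ i, (a i : ℂ) * ((star U * matFun hσ.1 (Real.logb 2) * U) i i)
        = ∑ i, (a i : ℂ) * (∑ j, ((Real.logb 2 (b j) : ℝ) : ℂ) * ((c i j : ℝ) : ℂ)) :=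
      Finset.sum_congr rfl fun i _ => by rw [h2 i]
    rw [h3]
    push_cast
    refine Finset.sum_congr rfl fun i _ => ?_
    rw [Finset.mul_sum]
    refine Finset.sum_congr rfl fun j _ => ?_
    ring
  have hrel : Real.log 2 * ((ρ * (matFun hρ.1 (Real.logb 2) - matFun hσ.1 (Real.logb 2))).trace).re
      = ∑ i, ∑ j, (if a i = 0 ∨ b j = 0 then (0:ℝ)
          else c i j * (a i * (Real.log (a i) - Real.log (b j)))) := by
    have hlog2 : Real.log 2 ≠ 0 := by
      have : (0:ℝ) < Real.log 2 := Real.log_pos (by norm_num)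
      linarith
    rw [Matrix.mul_sub, Matrix.trace_sub]
    rw [Complex.sub_re, hE1, hE2, Complex.ofReal_re, Complex.ofReal_re]
    have hterm : ∀ i j, (if a i = 0 ∨ b j = 0 then (0:ℝ)
        else c i j * (a i * (Real.log (a i) - Real.log (b j))))
        = Real.log 2 * (c i j * (a i * Real.logb 2 (a i)))
          - Real.log 2 * (a i * (c i j * Real.logb 2 (b j))) := by
      intro i j
      by_cases hai : a i = 0
      · simp [hai]
      · by_cases hbj : b j = 0
        · have hz : a i * c i j = 0 := hsupp' j hbj i
          have hcz : c i j = 0 := by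
            rcases mul_eq_zero.mp hz with h | h
            · exact absurd h hai
            · exact h
          simp [hbj, hcz]
        · have hne : ¬ (a i = 0 ∨ b j = 0) := by push_neg; exact ⟨hai, hbj⟩
          rw [if_neg hne, Real.logb, Real.logb]
          field_simp
    calc Real.log 2 * ((∑ i, a i * Real.logb 2 (a i))
          - ∑ i, ∑ j, a i * (c i j * Real.logb 2 (b j)))
        = (∑ i, ∑ j, Real.log 2 * (c i j * (a i * Real.logb 2 (a i))))
          - ∑ i, ∑ j, Real.log 2 * (a i * (c i j * Real.logb 2 (b j))) := by
          rw [mul_sub]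
          congr 1
          · rw [Finset.mul_sum]
            refine Finset.sum_congr rfl fun i _ => ?_
            have h4 : (∑ j, Real.log 2 * (c i j * (a i * Real.logb 2 (a i))))
                = (∑ j, c i j) * (Real.log 2 * (a i * Real.logb 2 (a i))) := by
              rw [Finset.sum_mul]
              exact Finset.sum_congr rfl fun j _ => by ring
            rw [h4, hcrow i, one_mul]
          · rw [Finset.mul_sum]
            refine Finset.sum_congr rfl fun i _ => ?_
            rw [Finset.mul_sum]
      _ = ∑ i, ∑ j, (if a i = 0 ∨ b j = 0 then (0:ℝ)
            else c i j * (a i * (Real.log (a i) - Real.log (b j)))) := by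
          rw [← Finset.sum_sub_distrib]
          refine Finset.sum_congr rfl fun i _ => ?_
          rw [← Finset.sum_sub_distrib]
          exact Finset.sum_congr rfl fun j _ => (hterm i j).symm
  -- sums for K1
  have hsum_ca : (∑ k : n × n, if b k.2 = 0 then (0:ℝ) else c k.1 k.2 * a k.1) = 1 := by
    rw [Fintype.sum_prod_type]
    have h5 : ∀ i, (∑ j, if b j = 0 then (0:ℝ) else c i j * a i) = a i := by
      intro i
      have h6 : ∀ j, (if b j = 0 then (0:ℝ) else c i j * a i) = c i j * a i := by
        intro j
        by_cases hbj : b j = 0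
        · rw [if_pos hbj]
          have h7 := hsupp' j hbj i
          rw [mul_comm] at h7
          rw [h7]
        · rw [if_neg hbj]
      rw [Finset.sum_congr rfl fun j _ => h6 j]
      rw [show (∑ j, c i j * a i) = (∑ j, c i j) * a i from (Finset.sum_mul _ _ _).symm,
        hcrow i, one_mul]
    rw [Finset.sum_congr rfl fun i _ => h5 i, hsuma]
  have hsum_cb : (∑ k : n × n, c k.1 k.2 * b k.2) = 1 := by
    rw [Fintype.sum_prod_type, Finset.sum_comm]
    have h5 : ∀ j, (∑ i, c i j * b j) = b j := fun j => by
      rw [show (∑ i, c i j * b j) = (∑ i, c i j) * b j from (Finset.sum_mul _ _ _).symm,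
        hccol j, one_mul]
    rw [Finset.sum_congr rfl fun j _ => h5 j, hsumb]
  -- spectral form of σ
  have hσspec : σ = V * Matrix.diagonal (RCLike.ofReal ∘ b) * star V := hσ.1.spectral_theorem
  -- the core inequality
  have hcore : ∀ t : ℝ, 0 < t →
      q^2/(p + t*q) + (1-q)^2/((1-p) + t*(1-q)) ≤
        ∑ k : n × n, (if b k.2 = 0 then (0:ℝ)
          else c k.1 k.2 * (b k.2)^2 / (a k.1 + t * b k.2)) := by
    intro t ht
    have hq' : 0 < 1 - q := by linarith
    have hden1 : 0 < p + t*q := by positivity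
    have hden2 : 0 < (1-p) + t*(1-q) := by
      have h1 : 0 < t*(1-q) := by positivity
      have h2 : 0 ≤ 1 - p := by linarith
      linarith
    set μ : ℝ := q/(p+t*q) with hμdef
    set ν : ℝ := (1-q)/((1-p)+t*(1-q)) with hνdef
    have hμ0 : 0 < μ := by rw [hμdef]; positivity
    have hν0 : 0 < ν := by rw [hνdef]; positivity
    set T : Matrix n n ℂ := ((μ:ℝ):ℂ) • Q + ((ν:ℝ):ℂ) • ((1 : Matrix n n ℂ) - Q) with hTdef
    have hQherm : star Q = Q := by
      rw [Matrix.star_eq_conjTranspose, hQ.1]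
    have hQ'herm : star ((1 : Matrix n n ℂ) - Q) = 1 - Q := by
      rw [Matrix.star_eq_conjTranspose, hQ'.1]
    have hTherm : star T = T := by
      rw [hTdef, star_add, star_smul, star_smul, hQherm, hQ'herm]
      congr 1
      · congr 1
        exact Complex.conj_ofReal μ
      · congr 1
        exact Complex.conj_ofReal ν
    set S : Matrix n n ℂ := star U * T * V with hSdef
    have hstarS : star S = star V * T * U := by
      rw [hSdef]
      simp only [StarMul.star_mul, star_star, hTherm, Matrix.mul_assoc]
    -- trace identities
    have hσQ : (σ * Q).trace = ((q:ℝ) : ℂ) := by rw [Matrix.trace_mul_comm]; exact hrealq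
    have hρQ : (ρ * Q).trace = ((p:ℝ) : ℂ) := by rw [Matrix.trace_mul_comm]; exact hrealp
    have hσQ' : (σ * ((1 : Matrix n n ℂ) - Q)).trace = ((1 - q : ℝ) : ℂ) := by
      rw [Matrix.mul_sub, Matrix.mul_one, Matrix.trace_sub, hσtr, hσQ]
      push_cast
      ring
    have hρQ' : (ρ * ((1 : Matrix n n ℂ) - Q)).trace = ((1 - p : ℝ) : ℂ) := by
      rw [Matrix.mul_sub, Matrix.mul_one, Matrix.trace_sub, hρtr, hρQ]
      push_cast
      ring
    have htrσT : (σ * T).trace = ((μ*q + ν*(1-q) : ℝ) : ℂ) := by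
      rw [hTdef, Matrix.mul_add, Matrix.mul_smul, Matrix.mul_smul, Matrix.trace_add,
        Matrix.trace_smul, Matrix.trace_smul, hσQ, hσQ']
      push_cast
      simp [smul_eq_mul]
    -- inner product sum identity
    have hPsum : (∑ k : n × n, (starRingEnd ℂ) (((Real.sqrt (b k.2) : ℝ):ℂ) * S k.1 k.2)
          * (((Real.sqrt (b k.2) : ℝ):ℂ) * Γ k.1 k.2)) = ((μ*q + ν*(1-q) : ℝ) : ℂ) := by
      have hterm : ∀ (i j : n), (starRingEnd ℂ) (((Real.sqrt (b j) : ℝ):ℂ) * S i j)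
          * (((Real.sqrt (b j) : ℝ):ℂ) * Γ i j)
          = ((b j : ℝ):ℂ) * ((star S) j i * Γ i j) := by
        intro i j
        rw [_root_.map_mul, Complex.conj_ofReal]
        have h8 : (star S) j i = (starRingEnd ℂ) (S i j) := by
          rw [Matrix.star_eq_conjTranspose, Matrix.conjTranspose_apply, Complex.star_def]
        rw [h8]
        have hb2 : ((Real.sqrt (b j) : ℝ):ℂ) * ((Real.sqrt (b j) : ℝ):ℂ) = ((b j : ℝ) : ℂ) := by
          rw [← Complex.ofReal_mul, Real.mul_self_sqrt (hb j)]
        calc ((Real.sqrt (b j) : ℝ):ℂ) * (starRingEnd ℂ) (S i j)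
              * (((Real.sqrt (b j) : ℝ):ℂ) * Γ i j)
            = (((Real.sqrt (b j) : ℝ):ℂ) * ((Real.sqrt (b j) : ℝ):ℂ))
              * ((starRingEnd ℂ) (S i j) * Γ i j) := by ring
          _ = ((b j : ℝ):ℂ) * ((starRingEnd ℂ) (S i j) * Γ i j) := by rw [hb2]
      rw [Fintype.sum_prod_type, Finset.sum_comm]
      have h9 : ∀ j, (∑ i, (starRingEnd ℂ) (((Real.sqrt (b j) : ℝ):ℂ) * S i j)
          * (((Real.sqrt (b j) : ℝ):ℂ) * Γ i j))
          = ((b j : ℝ):ℂ) * ((star S * Γ) j j) := by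
        intro j
        rw [Finset.sum_congr rfl fun i _ => hterm i j, ← Finset.mul_sum, Matrix.mul_apply]
      rw [Finset.sum_congr rfl fun j _ => h9 j]
      have h10 : star S * Γ = star V * T * V := by
        calc star S * Γ = star V * T * (U * (star U * V)) := by
              rw [hstarS, hΓdef]
              simp only [Matrix.mul_assoc]
          _ = star V * T * V := by
              rw [← Matrix.mul_assoc U, hU2, Matrix.one_mul]
      rw [h10]
      have h11 : (∑ j, ((b j : ℝ):ℂ) * ((star V * T * V) j j))
          = (Matrix.diagonal (RCLike.ofReal ∘ b) * (star V * T * V)).trace := by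
        rw [trace_diag_mul]
        rfl
      rw [h11, ← trace_sandwich, ← hσspec, htrσT]
    -- quadratic sums
    have hSa : (ρ * (T * T)).trace = ((∑ i, ∑ j, a i * Complex.normSq (S i j) : ℝ) : ℂ) := by
      rw [trace_state_form hρ.1 (T*T)]
      have h1 : star U * (T * T) * U = S * star S := conj_sq_collapse U T V hV2 hTherm
      rw [h1]
      rw [Finset.sum_congr rfl fun i _ => by rw [mul_star_diag S i]]
      push_cast
      exact Finset.sum_congr rfl fun i _ => by rw [Finset.mul_sum]
    have hSb : (σ * (T * T)).trace = ((∑ j, ∑ i, b j * Complex.normSq (S i j) : ℝ) : ℂ) := by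
      rw [trace_state_form hσ.1 (T*T)]
      have h1 : star V * (T * T) * V = star S * S := by
        have h0 := conj_sq_collapse V T U hU2 hTherm
        rw [← hstarS] at h0
        rw [h0, star_star]
      rw [h1]
      rw [Finset.sum_congr rfl fun j _ => by rw [star_mul_diag S j]]
      push_cast
      exact Finset.sum_congr rfl fun j _ => by rw [Finset.mul_sum]
    -- psd bound
    set R : Matrix n n ℂ := ((μ^2:ℝ):ℂ) • Q + ((ν^2:ℝ):ℂ) • ((1 : Matrix n n ℂ) - Q) with hRdef
    have hRT : R - T * T = (((μ-ν)^2 : ℝ) : ℂ) • (Q - Q * Q) := by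
      rw [hRdef, hTdef]
      have e1 : Q * ((1:Matrix n n ℂ) - Q) = Q - Q*Q := by
        rw [Matrix.mul_sub, Matrix.mul_one]
      have e2 : ((1:Matrix n n ℂ) - Q) * Q = Q - Q*Q := by
        rw [Matrix.sub_mul, Matrix.one_mul]
      have e3 : ((1:Matrix n n ℂ) - Q) * ((1:Matrix n n ℂ) - Q)
          = (1 : Matrix n n ℂ) - Q - (Q - Q*Q) := by
        rw [Matrix.sub_mul, Matrix.one_mul, e1]
      simp only [Matrix.add_mul, Matrix.mul_add, smul_mul_assoc, mul_smul_comm, smul_smul,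
        e1, e2, e3]
      push_cast
      module
    have hRTpsd : (R - T * T).PosSemidef := by
      rw [hRT]
      exact psd_real_smul (Q_sub_sq_psd hQ hQ') (sq_nonneg _)
    have hρR : (ρ * R).trace = ((μ^2*p + ν^2*(1-p) : ℝ) : ℂ) := by
      rw [hRdef, Matrix.mul_add, Matrix.mul_smul, Matrix.mul_smul, Matrix.trace_add,
        Matrix.trace_smul, Matrix.trace_smul, hρQ, hρQ']
      push_cast
      simp [smul_eq_mul]
    have hσR : (σ * R).trace = ((μ^2*q + ν^2*(1-q) : ℝ) : ℂ) := by
      rw [hRdef, Matrix.mul_add, Matrix.mul_smul, Matrix.mul_smul, Matrix.trace_add,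
        Matrix.trace_smul, Matrix.trace_smul, hσQ, hσQ']
      push_cast
      simp [smul_eq_mul]
    have hmainρ : (∑ i, ∑ j, a i * Complex.normSq (S i j)) ≤ μ^2*p + ν^2*(1-p) := by
      have h1 := trace_mul_psd_nonneg hρ hRTpsd
      have h2 : (ρ * (R - T*T)).trace = (ρ*R).trace - (ρ*(T*T)).trace := by
        rw [Matrix.mul_sub, Matrix.trace_sub]
      rw [h2, sub_nonneg, hSa, hρR] at h1
      exact_mod_cast h1
    have hmainσ : (∑ j, ∑ i, b j * Complex.normSq (S i j)) ≤ μ^2*q + ν^2*(1-q) := by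
      have h1 := trace_mul_psd_nonneg hσ hRTpsd
      have h2 : (σ * (R - T*T)).trace = (σ*R).trace - (σ*(T*T)).trace := by
        rw [Matrix.mul_sub, Matrix.trace_sub]
      rw [h2, sub_nonneg, hSb, hσR] at h1
      exact_mod_cast h1
    -- Cauchy-Schwarz
    set θ : n × n → ℝ := fun k => if b k.2 = 0 then t else (a k.1 + t * b k.2)/ b k.2 with hθdef
    have hθpos : ∀ k, 0 < θ k := by
      intro k
      simp only [hθdef]
      by_cases hbk : b k.2 = 0
      · rw [if_pos hbk]; exact ht
      · rw [if_neg hbk]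
        have hbk' : 0 < b k.2 := (hb k.2).lt_of_ne (Ne.symm hbk)
        have h1 : 0 < a k.1 + t * b k.2 := by
          have := ha k.1
          positivity
        positivity
    have hCS := weighted_cs (fun k : n × n => ((Real.sqrt (b k.2) : ℝ):ℂ) * S k.1 k.2)
        (fun k : n × n => ((Real.sqrt (b k.2) : ℝ):ℂ) * Γ k.1 k.2) θ hθpos
    rw [hPsum] at hCS
    have hvalpos : 0 < μ*q + ν*(1-q) := by
      have h1 := mul_pos hμ0 hq0
      have h2 := mul_pos hν0 hq'
      linarith
    rw [Complex.norm_of_nonneg hvalpos.le] at hCS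
    have hψ : (∑ k : n × n, θ k * Complex.normSq (((Real.sqrt (b k.2) : ℝ):ℂ) * S k.1 k.2))
        ≤ μ*q + ν*(1-q) := by
      have hterm : ∀ k : n × n, θ k * Complex.normSq (((Real.sqrt (b k.2) : ℝ):ℂ) * S k.1 k.2)
          ≤ (a k.1 + t * b k.2) * Complex.normSq (S k.1 k.2) := by
        intro k
        rw [Complex.normSq_mul, Complex.normSq_ofReal, Real.mul_self_sqrt (hb k.2)]
        simp only [hθdef]
        by_cases hbk : b k.2 = 0
        · rw [if_pos hbk, hbk]
          simp only [mul_zero, zero_mul, add_zero]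
          have := ha k.1
          have := Complex.normSq_nonneg (S k.1 k.2)
          positivity
        · rw [if_neg hbk]
          have hbk' : 0 < b k.2 := (hb k.2).lt_of_ne (Ne.symm hbk)
          have heq : (a k.1 + t * b k.2)/ b k.2 * (b k.2 * Complex.normSq (S k.1 k.2))
              = (a k.1 + t * b k.2) * Complex.normSq (S k.1 k.2) := by
            field_simp
          rw [heq]
      calc (∑ k : n × n, θ k * Complex.normSq (((Real.sqrt (b k.2) : ℝ):ℂ) * S k.1 k.2))
          ≤ ∑ k : n × n, (a k.1 + t * b k.2) * Complex.normSq (S k.1 k.2) :=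
            Finset.sum_le_sum fun k _ => hterm k
        _ = (∑ k : n × n, a k.1 * Complex.normSq (S k.1 k.2))
            + t * (∑ k : n × n, b k.2 * Complex.normSq (S k.1 k.2)) := by
            rw [Finset.mul_sum, ← Finset.sum_add_distrib]
            exact Finset.sum_congr rfl fun k _ => by ring
        _ ≤ (μ^2*p + ν^2*(1-p)) + t * (μ^2*q + ν^2*(1-q)) := by
            have ea : (∑ k : n × n, a k.1 * Complex.normSq (S k.1 k.2))
                = ∑ i, ∑ j, a i * Complex.normSq (S i j) := Fintype.sum_prod_type _
            have eb : (∑ k : n × n, b k.2 * Complex.normSq (S k.1 k.2))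
                = ∑ j, ∑ i, b j * Complex.normSq (S i j) := by
              rw [Fintype.sum_prod_type, Finset.sum_comm]
            rw [ea, eb]
            exact add_le_add hmainρ (mul_le_mul_of_nonneg_left hmainσ ht.le)
        _ = μ*q + ν*(1-q) := by
            rw [hμdef, hνdef]
            field_simp
            ring
    have hξ : (∑ k : n × n, Complex.normSq (((Real.sqrt (b k.2) : ℝ):ℂ) * Γ k.1 k.2) / θ k)
        = ∑ k : n × n, (if b k.2 = 0 then (0:ℝ)
            else c k.1 k.2 * (b k.2)^2/(a k.1 + t * b k.2)) := by
      refine Finset.sum_congr rfl fun k _ => ?_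
      rw [Complex.normSq_mul, Complex.normSq_ofReal, Real.mul_self_sqrt (hb k.2)]
      simp only [hθdef]
      by_cases hbk : b k.2 = 0
      · rw [if_pos hbk, if_pos hbk, hbk]
        simp
      · rw [if_neg hbk, if_neg hbk]
        have hbk' : 0 < b k.2 := (hb k.2).lt_of_ne (Ne.symm hbk)
        have h1 : 0 < a k.1 + t * b k.2 := by
          have := ha k.1
          positivity
        simp only [hcdef]
        field_simp
    rw [hξ] at hCS
    set β := ∑ k : n × n, (if b k.2 = 0 then (0:ℝ)
        else c k.1 k.2 * (b k.2)^2/(a k.1 + t * b k.2)) with hβdef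
    have hβ0 : 0 ≤ β := by
      rw [hβdef]
      refine Finset.sum_nonneg fun k _ => ?_
      by_cases hbk : b k.2 = 0
      · rw [if_pos hbk]
      · rw [if_neg hbk]
        have hbk' : 0 < b k.2 := (hb k.2).lt_of_ne (Ne.symm hbk)
        have h1 : 0 < a k.1 + t * b k.2 := by
          have := ha k.1
          positivity
        have := hc k.1 k.2
        positivity
    have h2 : (μ*q + ν*(1-q))^2 ≤ (μ*q + ν*(1-q)) * β :=
      le_trans hCS (mul_le_mul_of_nonneg_right hψ hβ0)
    have h3 : μ*q + ν*(1-q) ≤ β := by nlinarith [h2, hvalpos]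
    have h4 : μ*q + ν*(1-q) = q^2/(p+t*q) + (1-q)^2/((1-p)+t*(1-q)) := by
      rw [hμdef, hνdef]
      ring
    rw [h4] at h3
    exact h3
  -- apply K1
  have hK := K1 (ι := n × n) (fun k => a k.1) (fun k => b k.2) (fun k => c k.1 k.2)
      (fun k => ha k.1) (fun k => hb k.2) (fun k => hc k.1 k.2) p q hp0 hp1 hq0 hq1
      hsum_ca hsum_cb hcore
  rw [hrel]
  calc p * Real.log p + (1-p) * Real.log (1-p) - p * Real.log q - (1-p) * Real.log (1-q)
      ≤ ∑ k : n × n, (if a k.1 = 0 ∨ b k.2 = 0 then (0:ℝ)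
          else c k.1 k.2 * termF (a k.1) (b k.2) 0) := hK
    _ = ∑ i, ∑ j, (if a i = 0 ∨ b j = 0 then (0:ℝ)
          else c i j * (a i * (Real.log (a i) - Real.log (b j)))) := by
        rw [Fintype.sum_prod_type]
        refine Finset.sum_congr rfl fun i _ => Finset.sum_congr rfl fun j _ => ?_
        rw [termF]
        norm_num

end DhAux


set_option maxHeartbeats 1000000 in
open DhAux in
/-- For density operators with `supp(ρ) ⊆ supp(σ)` and `0 ≤ ε < 1`,
`D_h^ε(ρ‖σ) ≤ (S(ρ‖σ) + H_b(ε))/(1 − ε)` where `S(ρ‖σ) = tr[ρ(log₂ρ − log₂σ)]` is the quantum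
relative entropy in bits and `H_b` is the binary entropy. -/
theorem Dh_le_relEntropy {n : Type*} [Fintype n] [DecidableEq n]
    (ρ σ : Matrix n n ℂ) (hρ : ρ.PosSemidef) (hρtr : ρ.trace = 1)
    (hσ : σ.PosSemidef) (hσtr : σ.trace = 1)
    (hsupp : ∀ v : n → ℂ, σ.mulVec v = 0 → ρ.mulVec v = 0)
    (ε : ℝ) (hε0 : 0 ≤ ε) (hε1 : ε < 1) :
    let relEnt : ℝ := ((ρ * (matFun hρ.1 (Real.logb 2) - matFun hσ.1 (Real.logb 2))).trace).re
    let Hb : ℝ := -(ε * Real.logb 2 ε) - (1 - ε) * Real.logb 2 (1 - ε)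
    Dh ε ρ σ ≤ (relEnt + Hb) / (1 - ε) := by
  intro relEnt Hb
  have hε1' : 0 < 1 - ε := by linarith
  have hlog2 : (0:ℝ) < Real.log 2 := Real.log_pos (by norm_num)
  -- nonnegativity of relEnt via the test Q = (1/2) • 1
  have hrelnn : 0 ≤ relEnt := by
    set Qh : Matrix n n ℂ := (((1:ℝ)/2 : ℝ) : ℂ) • (1 : Matrix n n ℂ) with hQhdef
    have hQh : Qh.PosSemidef := psd_real_smul Matrix.PosSemidef.one (by norm_num)
    have hQhsub : (1 : Matrix n n ℂ) - Qh = Qh := by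
      rw [hQhdef, sub_eq_iff_eq_add, ← add_smul]
      norm_num
    have hQh' : ((1 : Matrix n n ℂ) - Qh).PosSemidef := by rw [hQhsub]; exact hQh
    have htrρ : ((Qh * ρ).trace).re = 1/2 := by
      rw [hQhdef, smul_mul_assoc, Matrix.one_mul, Matrix.trace_smul, hρtr]
      simp
    have htrσ : ((Qh * σ).trace).re = 1/2 := by
      rw [hQhdef, smul_mul_assoc, Matrix.one_mul, Matrix.trace_smul, hσtr]
      simp
    have key := key_setup hρ hρtr hσ hσtr hsupp hQh hQh'
      (by rw [htrρ]; norm_num) (by rw [htrσ]; norm_num)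
    obtain ⟨-, -, key⟩ := key
    rw [htrρ, htrσ] at key
    have h0 : (1/2 : ℝ) * Real.log (1/2) + (1 - 1/2) * Real.log (1 - 1/2)
        - (1/2) * Real.log (1/2) - (1 - 1/2) * Real.log (1 - 1/2) = 0 := by ring
    rw [h0] at key
    nlinarith [key, hlog2]
  have hHb : 0 ≤ Hb := by
    have h1 : ε * Real.logb 2 ε ≤ 0 := by
      rcases eq_or_lt_of_le hε0 with h | h
      · rw [← h]; simp
      · have := Real.logb_nonpos (b := 2) (by norm_num) hε0 hε1.le
        exact mul_nonpos_of_nonneg_of_nonpos hε0 this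
    have h2 : (1 - ε) * Real.logb 2 (1 - ε) ≤ 0 := by
      have := Real.logb_nonpos (b := 2) (by norm_num) hε1'.le (by linarith)
      exact mul_nonpos_of_nonneg_of_nonpos hε1'.le this
    simp only [Hb]
    linarith
  have hb0 : 0 ≤ (relEnt + Hb) / (1 - ε) := div_nonneg (by linarith) hε1'.le
  apply Real.sSup_le _ hb0
  rintro x ⟨Q, hQ, hQ', hp, rfl⟩
  -- q ≤ 1
  have hq1' : ((Q * σ).trace).re ≤ 1 := by
    have h1 := trace_mul_psd_nonneg hQ' hσ
    have hrealq : (Q * σ).trace = (((Q * σ).trace).re : ℂ) := trace_mul_herm_real hQ.1 hσ.1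
    have h2 : (((1 : Matrix n n ℂ) - Q) * σ).trace = 1 - (((Q * σ).trace).re : ℂ) := by
      rw [Matrix.sub_mul, Matrix.one_mul, Matrix.trace_sub, hσtr, ← hrealq]
    rw [h2] at h1
    have h3 := (Complex.le_def.mp h1).1
    simp only [Complex.zero_re, Complex.sub_re, Complex.one_re, Complex.ofReal_re] at h3
    linarith
  have hp0 : 0 < ((Q * ρ).trace).re := by linarith
  rcases lt_or_ge ((Q * σ).trace).re 1 with hqlt | hqge
  · obtain ⟨hq0, hp1, key⟩ := key_setup hρ hρtr hσ hσtr hsupp hQ hQ' hp0 hqlt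
    have hstep := classical_step (D := Real.log 2 * relEnt)
      (mul_nonneg hlog2.le hrelnn) key hp hp1 hq0 hq1' hε0 hε1
    have hx : Real.logb 2 (1 / ((Q * σ).trace).re) = (-Real.log ((Q * σ).trace).re) / Real.log 2 := by
      rw [Real.logb, one_div, Real.log_inv]
    rw [hx]
    rw [div_le_iff₀ hlog2]
    rw [le_div_iff₀ hε1'] at hstep
    calc -Real.log ((Q * σ).trace).re ≤
        (Real.log 2 * relEnt + (-(ε * Real.log ε) - (1 - ε) * Real.log (1 - ε))) / (1 - ε) := by
          rw [le_div_iff₀ hε1']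
          exact hstep
      _ = (relEnt + Hb) / (1 - ε) * Real.log 2 := by
          simp only [Hb, Real.logb]
          field_simp
  · have hq1 : ((Q * σ).trace).re = 1 := le_antisymm hq1' hqge
    rw [hq1]
    norm_num
    exact hb0
end
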